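/- Let r ≥ 2 be an integer and suppose q = r² and a = 2r or a = −2r (the cases a = ±2√q). Then limsup_{X→∞} |M(X)|/q^{X/2} = ∞; that is, for every real C > 0 there exist infinitely many positive integers X with |M(X)| > C·q^{X/2}. -/
import Mathlib


open Real Filter

/-- The coefficient sequence `c_N` with `c_0 = 1`, `c_1 = a - q - 1`,
`c_2 = a*c_1 - q*c_0 + q`, and `c_N = a*c_{N-1} - q*c_{N-2}` for `N ≥ 3`;
these are the Taylor coefficients at `u = 0` of `(1-u)(1-qu)/(1-au+qu²)`,
the reciprocal of the zeta function of an elliptic curve over `F_q` with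
Frobenius trace `a`. -/
def mertC (q a : ℤ) : ℕ → ℤ
  | 0 => 1
  | 1 => a - q - 1
  | 2 => a * (a - q - 1) - q * 1 + q
  | (N + 3) => a * mertC q a (N + 2) - q * mertC q a (N + 1)

/-- `M(X) = ∑_{N=0}^{X-1} c_N`, the Mertens summatory function of the
Möbius function of an elliptic curve over `F_q` with Frobenius trace `a`. -/
def mertM (q a : ℤ) (X : ℕ) : ℤ := ∑ N ∈ Finset.range X, mertC q a N

lemma mertC_plus (r : ℤ) : ∀ N : ℕ,
    mertC (r^2) (2*r) (N+1) = -((N:ℤ)+1) * r^N * (r-1)^2 := by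
  intro N
  induction N using Nat.strong_induction_on with
  | _ N ih =>
    match N with
    | 0 => show mertC (r^2) (2*r) 1 = _; simp [mertC]; ring
    | 1 => show mertC (r^2) (2*r) 2 = _; simp [mertC]; ring
    | (n+2) =>
      have h1 := ih (n+1) (by omega)
      have h2 := ih n (by omega)
      show mertC (r^2) (2*r) (n+3) = _
      rw [mertC, h1, h2]
      push_cast
      ring

lemma mertC_minus (r : ℤ) : ∀ N : ℕ,
    mertC (r^2) (-(2*r)) (N+1) = ((N:ℤ)+1) * (-1)^(N+1) * r^N * (r+1)^2 := by
  intro N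
  induction N using Nat.strong_induction_on with
  | _ N ih =>
    match N with
    | 0 => show mertC (r^2) (-(2*r)) 1 = _; simp [mertC]; ring
    | 1 => show mertC (r^2) (-(2*r)) 2 = _; simp [mertC]; ring
    | (n+2) =>
      have h1 := ih (n+1) (by omega)
      have h2 := ih n (by omega)
      show mertC (r^2) (-(2*r)) (n+3) = _
      rw [mertC, h1, h2]
      push_cast
      ring

lemma mertM_plus (r : ℤ) : ∀ X : ℕ,
    mertM (r^2) (2*r) (X+1) = r^X * ((X:ℤ) + 1 - X*r) := by
  intro X
  induction X with
  | zero => simp [mertM, mertC]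
  | succ n ih =>
    rw [mertM, Finset.sum_range_succ, ← mertM, ih, mertC_plus]
    push_cast
    ring

lemma mertM_minus (r : ℤ) : ∀ X : ℕ,
    mertM (r^2) (-(2*r)) (X+1) = (-1)^X * r^X * ((X:ℤ) + 1 + X*r) := by
  intro X
  induction X with
  | zero => simp [mertM, mertC]
  | succ n ih =>
    rw [mertM, Finset.sum_range_succ, ← mertM, ih, mertC_minus]
    push_cast
    ring

lemma mertM_abs_lb (r : ℤ) (hr : 2 ≤ r) (q a : ℤ)
    (hq : q = r ^ 2) (ha : a = 2 * r ∨ a = -(2 * r)) (X : ℕ) :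
    ((X:ℤ)*(r-1) - 1) * r^X ≤ |mertM q a (X+1)| := by
  have hrX : (0:ℤ) ≤ r^X := pow_nonneg (by linarith) X
  subst hq
  rcases ha with ha | ha <;> subst ha
  · rw [mertM_plus, abs_mul, abs_of_nonneg hrX]
    have h1 : -((X:ℤ) + 1 - X*r) ≤ |(X:ℤ) + 1 - X*r| := neg_le_abs _
    have h2 : ((X:ℤ)*(r-1) - 1) ≤ |(X:ℤ) + 1 - X*r| := by linarith [h1]; 
    calc ((X:ℤ)*(r-1) - 1) * r^X ≤ |(X:ℤ) + 1 - X*r| * r^X :=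
          mul_le_mul_of_nonneg_right h2 hrX
      _ = r^X * |(X:ℤ) + 1 - X*r| := by ring
  · rw [mertM_minus, abs_mul, abs_mul, abs_pow, abs_neg, abs_one, one_pow,
      one_mul, abs_of_nonneg hrX]
    have hX0 : (0:ℤ) ≤ (X:ℤ) := Int.ofNat_nonneg X
    have h2 : ((X:ℤ)*(r-1) - 1) ≤ |(X:ℤ) + 1 + X*r| := by
      have : ((X:ℤ) + 1 + X*r) ≤ |(X:ℤ) + 1 + X*r| := le_abs_self _
      nlinarith
    calc ((X:ℤ)*(r-1) - 1) * r^X ≤ |(X:ℤ) + 1 + X*r| * r^X :=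
          mul_le_mul_of_nonneg_right h2 hrX
      _ = r^X * |(X:ℤ) + 1 + X*r| := by ring

theorem mertens_limsup_infinite_double_zero (r : ℤ) (hr : 2 ≤ r) (q a : ℤ)
    (hq : q = r ^ 2) (ha : a = 2 * r ∨ a = -(2 * r)) :
    ∀ C : ℝ, 0 < C → ∀ X₀ : ℕ, ∃ X : ℕ, X₀ ≤ X ∧ 1 ≤ X ∧
      |(mertM q a X : ℝ)| > C * (q : ℝ) ^ ((X : ℝ) / 2) := by
  intro C hC X₀
  have hr0 : (0:ℝ) < (r:ℝ) := by exact_mod_cast lt_of_lt_of_le (by norm_num) hr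
  set n : ℕ := max X₀ (⌈C * (r:ℝ)⌉₊ + 2) with hn
  refine ⟨n + 1, le_trans (le_max_left _ _) (Nat.le_succ n), by omega, ?_⟩
  -- rewrite the rpow
  have hrpow : (q : ℝ) ^ (((n + 1 : ℕ) : ℝ) / 2) = (r:ℝ) ^ (n + 1) := by
    rw [hq]
    push_cast
    rw [show ((r:ℝ)^2 : ℝ) = (r:ℝ) ^ ((2:ℕ) : ℝ) from (Real.rpow_natCast _ 2).symm,
      ← Real.rpow_mul hr0.le]
    rw [show ((2:ℕ):ℝ) * (((n:ℝ) + 1) / 2) = ((n + 1 : ℕ) : ℝ) by push_cast; ring]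
    exact Real.rpow_natCast _ _
  rw [hrpow]
  have hlb := mertM_abs_lb r hr q a hq ha n
  have hlbR : (((n:ℤ)*(r-1) - 1 : ℤ) : ℝ) * (r:ℝ)^n ≤ |(mertM q a (n+1) : ℝ)| := by
    rw [← Int.cast_abs]
    exact_mod_cast hlb
  have hceil : C * (r:ℝ) ≤ ⌈C * (r:ℝ)⌉₊ := Nat.le_ceil _
  have hnge : ((⌈C * (r:ℝ)⌉₊ + 2 : ℕ) : ℝ) ≤ (n:ℝ) := by
    exact_mod_cast Nat.le_max_right X₀ _
  have hkey : C * (r:ℝ) < (n:ℝ) * ((r:ℝ) - 1) - 1 := by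
    have h1 : (n:ℝ) * ((r:ℝ) - 1) ≥ (n:ℝ) * 1 := by
      apply mul_le_mul_of_nonneg_left _ (Nat.cast_nonneg n)
      have hr2 : (2:ℝ) ≤ (r:ℝ) := by exact_mod_cast hr
      linarith
    push_cast at hnge
    linarith
  have hrn : (0:ℝ) < (r:ℝ)^n := pow_pos hr0 n
  calc C * (r:ℝ)^(n+1) = (C * (r:ℝ)) * (r:ℝ)^n := by ring
    _ < ((n:ℝ) * ((r:ℝ) - 1) - 1) * (r:ℝ)^n := by
        exact mul_lt_mul_of_pos_right hkey hrn
    _ ≤ |(mertM q a (n+1) : ℝ)| := by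
        refine le_trans (le_of_eq ?_) hlbR
        push_cast
        ring
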